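/- In the Euclidean signature case, the quartic Ψ₄z⁴ − 4Ψ₃z³ + 6Ψ₂z² + 4Ψ₁z + Ψ₀ with reality conditions Ψ₄ = conj(Ψ₀), Ψ₃ = conj(Ψ₁), Ψ₂ ∈ ℝ, and (Ψ₀,Ψ₁,Ψ₂) ≠ (0,0,0), never has a root of multiplicity three or four. (Hence only Petrov types G, D and 0 occur in Riemannian signature.) -/
import Mathlib


/-!
STATEMENT 9: In Euclidean signature, the quartic Ψ₄z⁴ − 4Ψ₃z³ + 6Ψ₂z² + 4Ψ₁z + Ψ₀
with reality conditions Ψ₄ = conj Ψ₀, Ψ₃ = conj Ψ₁, Ψ₂ real, and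
(Ψ₀,Ψ₁,Ψ₂) ≠ (0,0,0), never has a root of multiplicity three or four; nor has the
projective root at infinity (counted with multiplicity 4 − natDegree) multiplicity
three or four. Hence only Petrov types G, D and 0 occur in Riemannian signature.
-/

open Polynomial
open scoped ComplexConjugate

theorem euclidean_no_triple_or_quadruple_roots
    (Ψ₀ Ψ₁ Ψ₂ Ψ₃ Ψ₄ : ℂ)
    (h4 : Ψ₄ = conj Ψ₀) (h3 : Ψ₃ = conj Ψ₁) (h2 : Ψ₂ = conj Ψ₂)
    (hne : ¬(Ψ₀ = 0 ∧ Ψ₁ = 0 ∧ Ψ₂ = 0)) :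
    (∀ z : ℂ,
      (C Ψ₄ * X ^ 4 - C (4 * Ψ₃) * X ^ 3 + C (6 * Ψ₂) * X ^ 2 + C (4 * Ψ₁) * X
          + C Ψ₀).rootMultiplicity z < 3) ∧
    4 - (C Ψ₄ * X ^ 4 - C (4 * Ψ₃) * X ^ 3 + C (6 * Ψ₂) * X ^ 2 + C (4 * Ψ₁) * X
          + C Ψ₀).natDegree < 3 := by
  subst h4 h3
  set a := Ψ₀; set b := Ψ₁; set c := Ψ₂
  set p : ℂ[X] := C (conj a) * X ^ 4 - C (4 * conj b) * X ^ 3 + C (6 * c) * X ^ 2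
      + C (4 * b) * X + C a with hp
  constructor
  · intro z
    by_contra hcon
    push_neg at hcon
    have e0 : p.eval z = 0 := isRoot_iterate_derivative_of_lt_rootMultiplicity
      (n := 0) (lt_of_lt_of_le (by norm_num) hcon)
    have e1' : (derivative^[1] p).eval z = 0 := isRoot_iterate_derivative_of_lt_rootMultiplicity
      (lt_of_lt_of_le (by norm_num) hcon)
    have e2' : (derivative^[2] p).eval z = 0 := isRoot_iterate_derivative_of_lt_rootMultiplicity
      (lt_of_lt_of_le (by norm_num) hcon)
    simp only [hp, Function.iterate_succ, Function.iterate_zero, Function.comp_apply, id,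
      derivative_add, derivative_sub, derivative_mul, derivative_C, derivative_X, derivative_pow,
      derivative_one, derivative_zero, eval_add, eval_sub, eval_mul, eval_pow, eval_C, eval_X,
      eval_zero, eval_one] at e0 e1' e2'
    norm_num at e0 e1' e2'
    have E0 : conj a * z^4 - 4*conj b*z^3 + 6*c*z^2 + 4*b*z + a = 0 := by
      linear_combination e0
    have E1 : conj a * z^3 - 3*conj b*z^2 + 3*c*z + b = 0 := by linear_combination e1'/4
    have E2 : conj a * z^2 - 2*conj b*z + c = 0 := by linear_combination e2'/12
    have cE2 : a * (conj z)^2 - 2*b*(conj z) + c = 0 := by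
      have h := congrArg conj E2
      simp only [map_add, map_sub, map_mul, map_pow, map_ofNat, map_zero, Complex.conj_conj,
        ← h2] at h
      linear_combination h
    have F2 : -(conj b)*z^2 + 2*c*z + b = 0 := by linear_combination E1 - z*E2
    have F3 : c*z^2 + 2*b*z + a = 0 := by linear_combination E0 - z*E1 - z*F2
    have cF2 : -b*(conj z)^2 + 2*c*(conj z) + conj b = 0 := by
      have h := congrArg conj F2
      simp only [map_add, map_sub, map_mul, map_pow, map_neg, map_ofNat, map_zero,
        Complex.conj_conj, ← h2] at h
      linear_combination h
    have cF3 : c*(conj z)^2 + 2*(conj b)*(conj z) + conj a = 0 := by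
      have h := congrArg conj F3
      simp only [map_add, map_sub, map_mul, map_pow, map_ofNat, map_zero, Complex.conj_conj,
        ← h2] at h
      linear_combination h
    have ht : z * conj z + 1 ≠ 0 := by
      have h0 : (0:ℝ) < Complex.normSq z + 1 := by
        have := Complex.normSq_nonneg z; linarith
      rw [Complex.mul_conj]
      exact_mod_cast h0.ne'
    have A1 : (conj a)*(z*conj z-1) - 2*(conj b)*(conj z) = 0 :=
      (mul_eq_zero.mp (show (z*conj z+1) * ((conj a)*(z*conj z-1) - 2*(conj b)*(conj z)) = 0 by
        linear_combination (conj z)^2*E2 - cF3)).resolve_left ht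
    have A2 : 2*c*(conj z) - (conj b)*(z*conj z-1) = 0 :=
      (mul_eq_zero.mp (show (z*conj z+1) * (2*c*(conj z) - (conj b)*(z*conj z-1)) = 0 by
        linear_combination (conj z)^2*F2 + cF2)).resolve_left ht
    have A3 : c*(z*conj z-1) + 2*b*(conj z) = 0 :=
      (mul_eq_zero.mp (show (z*conj z+1) * (c*(z*conj z-1) + 2*b*(conj z)) = 0 by
        linear_combination (conj z)^2*F3 - cE2)).resolve_left ht
    have cA3 : c*(z*conj z-1) + 2*(conj b)*z = 0 := by
      have h := congrArg conj A3
      simp only [map_add, map_sub, map_mul, map_one, map_ofNat, map_zero,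
        Complex.conj_conj, ← h2] at h
      linear_combination h
    have hc : c = 0 := by
      have hcc : c * (z*conj z+1)^2 = 0 := by linear_combination 2*z*A2 + (z*conj z-1)*cA3
      exact (mul_eq_zero.mp hcc).resolve_right (pow_ne_zero _ ht)
    rcases eq_or_ne z 0 with hz | hz
    · subst hz
      refine hne ⟨by linear_combination F3, by linear_combination F2, hc⟩
    · have hzb' : conj z ≠ 0 := fun h => hz (by simpa using congrArg conj h)
      have hb : b = 0 := by
        have hbz : b * (2*conj z) = 0 := by linear_combination A3 - (z*conj z-1)*hc
        rcases mul_eq_zero.mp hbz with h | h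
        · exact h
        · exact absurd h (by simpa using hzb')
      refine hne ⟨by linear_combination F3 - z^2*hc - 2*z*hb, hb, hc⟩
  · have h2le : 2 ≤ p.natDegree := by
      by_cases ha : a = 0
      · by_cases hb : b = 0
        · have hcne : c ≠ 0 := fun hcz => hne ⟨ha, hb, hcz⟩
          refine le_natDegree_of_ne_zero (n := 2) ?_
          simp only [hp, coeff_add, coeff_sub, coeff_C_mul, coeff_X_pow, coeff_C, coeff_X]
          norm_num [hcne]
        · have h3le : 3 ≤ p.natDegree := by
            refine le_natDegree_of_ne_zero (n := 3) ?_
            simp only [hp, coeff_add, coeff_sub, coeff_C_mul, coeff_X_pow, coeff_C, coeff_X]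
            norm_num [hb]
          omega
      · have h4le : 4 ≤ p.natDegree := by
          refine le_natDegree_of_ne_zero (n := 4) ?_
          simp only [hp, coeff_add, coeff_sub, coeff_C_mul, coeff_X_pow, coeff_C, coeff_X]
          norm_num [ha]
        omega
    omega
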